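/- Let h : ℝ → ℝ be non-decreasing and bounded, and let x¹, x² : [0,∞) → ℝ be càdlàg with x¹_t − x²_t non-decreasing in t, nonnegative, and continuous (no jumps). Suppose y¹ and y² solve y^i_t = x^i_t − ∫_0^t h(y^i_s) ds for i = 1, 2. Then 0 ≤ y¹_t − y²_t ≤ x¹_t − x²_t for all t ≥ 0. -/

import Mathlib

open MeasureTheory Filter Topology Set

/-- A function `f : ℝ → ℝ` viewed on `[0,∞)` is càdlàg. -/
def Cadlag (f : ℝ → ℝ) : Prop :=
  (∀ t : ℝ, 0 ≤ t → ContinuousWithinAt f (Set.Ici t) t) ∧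
  (∀ t : ℝ, 0 < t → ∃ l : ℝ, Filter.Tendsto f (nhdsWithin t (Set.Iio t)) (nhds l))

/-- comparison of two solutions of `yⁱ t = xⁱ t - ∫_0^t h(yⁱ s) ds`
for a non-decreasing bounded `h`, when `x¹ - x²` is non-decreasing, nonnegative and
continuous on `[0,∞)`: then `0 ≤ y¹ - y² ≤ x¹ - x²` on `[0,∞)`. -/
theorem stmt7 (h : ℝ → ℝ) (hmono : Monotone h) (C : ℝ) (hbdd : ∀ y : ℝ, |h y| ≤ C)
    (x1 x2 : ℝ → ℝ) (hx1 : Cadlag x1) (hx2 : Cadlag x2)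
    (hdmono : MonotoneOn (fun t => x1 t - x2 t) (Set.Ici 0))
    (hdpos : ∀ t : ℝ, 0 ≤ t → 0 ≤ x1 t - x2 t)
    (hdcont : ContinuousOn (fun t => x1 t - x2 t) (Set.Ici 0))
    (y1 y2 : ℝ → ℝ)
    (hy1int : ∀ t : ℝ, 0 ≤ t →
      MeasureTheory.IntegrableOn (fun s => h (y1 s)) (Set.Ioc 0 t))
    (hy2int : ∀ t : ℝ, 0 ≤ t →
      MeasureTheory.IntegrableOn (fun s => h (y2 s)) (Set.Ioc 0 t))
    (hy1 : ∀ t : ℝ, 0 ≤ t → y1 t = x1 t - ∫ s in Set.Ioc (0:ℝ) t, h (y1 s))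
    (hy2 : ∀ t : ℝ, 0 ≤ t → y2 t = x2 t - ∫ s in Set.Ioc (0:ℝ) t, h (y2 s)) :
    ∀ t : ℝ, 0 ≤ t → 0 ≤ y1 t - y2 t ∧ y1 t - y2 t ≤ x1 t - x2 t := by
  set f : ℝ → ℝ := fun s => h (y1 s) - h (y2 s) with hf
  set D : ℝ → ℝ := fun t => x1 t - x2 t with hD
  set g : ℝ → ℝ := fun t => ∫ s in Set.Ioc (0:ℝ) t, f s with hg
  -- integrability of f
  have hfint : ∀ t : ℝ, 0 ≤ t → IntegrableOn f (Set.Ioc 0 t) := fun t ht =>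
    (hy1int t ht).sub (hy2int t ht)
  -- y1 - y2 = D - g on [0,∞)
  have hrep : ∀ t : ℝ, 0 ≤ t → y1 t - y2 t = D t - g t := by
    intro t ht
    rw [hy1 t ht, hy2 t ht]
    have : g t = (∫ s in Set.Ioc (0:ℝ) t, h (y1 s)) - ∫ s in Set.Ioc (0:ℝ) t, h (y2 s) :=
      integral_sub (hy1int t ht) (hy2int t ht)
    simp only [hD]
    rw [this]; ring
  have hg0 : g 0 = 0 := by simp [hg]
  -- additivity of g
  have hgadd : ∀ s t : ℝ, 0 ≤ s → s ≤ t → g t = g s + ∫ u in Set.Ioc s t, f u := by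
    intro s t hs hst
    have hU : Set.Ioc (0:ℝ) s ∪ Set.Ioc s t = Set.Ioc 0 t := Set.Ioc_union_Ioc_eq_Ioc hs hst
    have hint2 : IntegrableOn f (Set.Ioc s t) :=
      (hfint t (hs.trans hst)).mono_set (Set.Ioc_subset_Ioc hs le_rfl)
    have := setIntegral_union (Set.Ioc_disjoint_Ioc_of_le (a := (0:ℝ)) (b := s) (c := s) (d := t) le_rfl)
      measurableSet_Ioc (hfint s hs) hint2 (f := f)
    rw [hg]
    simp only
    rw [← hU, this]
  -- continuity of g on [0,∞)
  have hgcont : ∀ b : ℝ, 0 ≤ b → ContinuousOn g (Set.Icc 0 b) := by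
    intro b hb
    have : IntegrableOn f (Set.Icc 0 b) := by
      rw [integrableOn_Icc_iff_integrableOn_Ioc]
      exact hfint b hb
    exact intervalIntegral.continuousOn_primitive this
  -- sign lemmas for ∫ over Ioc s t
  have hneg : ∀ s t : ℝ, 0 ≤ s → s ≤ t → (∀ u ∈ Set.Ioc s t, f u ≤ 0) →
      (∫ u in Set.Ioc s t, f u) ≤ 0 := by
    intro s t _ _ hle
    apply setIntegral_nonpos measurableSet_Ioc
    exact hle
  have hpos : ∀ s t : ℝ, 0 ≤ s → s ≤ t → (∀ u ∈ Set.Ioc s t, 0 ≤ f u) →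
      0 ≤ ∫ u in Set.Ioc s t, f u := by
    intro s t _ _ hle
    exact setIntegral_nonneg measurableSet_Ioc hle
  -- Upper bound: g t ≥ 0 for all t ≥ 0
  have hgnn : ∀ t : ℝ, 0 ≤ t → 0 ≤ g t := by
    intro t1 ht1
    by_contra hlt
    push_neg at hlt
    set S : Set ℝ := Set.Icc 0 t1 ∩ g ⁻¹' (Set.Ici 0) with hS
    have hSne : (0:ℝ) ∈ S := ⟨⟨le_rfl, ht1⟩, by simp [hg0]⟩
    have hSbdd : BddAbove S := ⟨t1, fun x hx => hx.1.2⟩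
    have hScl : IsClosed S :=
      (hgcont t1 ht1).preimage_isClosed_of_isClosed isClosed_Icc isClosed_Ici
    set t0 := sSup S with ht0
    have ht0S : t0 ∈ S := hScl.csSup_mem ⟨0, hSne⟩ hSbdd
    have ht0nn : (0:ℝ) ≤ t0 := ht0S.1.1
    have ht0le : t0 ≤ t1 := ht0S.1.2
    -- on (t0, t1], g < 0, hence y1 > y2, hence f ≥ 0
    have hfnn : ∀ u ∈ Set.Ioc t0 t1, 0 ≤ f u := by
      intro u hu
      have hunn : (0:ℝ) ≤ u := ht0nn.trans hu.1.le
      have hgu : g u < 0 := by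
        by_contra hge
        push_neg at hge
        have : u ∈ S := ⟨⟨hunn, hu.2⟩, hge⟩
        exact absurd (le_csSup hSbdd this) (not_le.2 hu.1)
      have : 0 < y1 u - y2 u := by
        rw [hrep u hunn]
        have := hdpos u hunn
        simp only [hD]
        linarith
      exact sub_nonneg.2 (hmono (by linarith))
    have : 0 ≤ g t1 := by
      rw [hgadd t0 t1 ht0nn ht0le]
      have := hpos t0 t1 ht0nn ht0le hfnn
      have hgt0 : 0 ≤ g t0 := ht0S.2
      linarith
    linarith
  -- Lower bound: y1 - y2 ≥ 0, i.e. D - g ≥ 0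
  have hdnn : ∀ t : ℝ, 0 ≤ t → 0 ≤ D t - g t := by
    intro t1 ht1
    by_contra hlt
    push_neg at hlt
    set d : ℝ → ℝ := fun t => D t - g t with hd
    have hdcont' : ContinuousOn d (Set.Icc 0 t1) :=
      ((hdcont.mono (Set.Icc_subset_Ici_self)).sub (hgcont t1 ht1))
    set S : Set ℝ := Set.Icc 0 t1 ∩ d ⁻¹' (Set.Ici 0) with hS
    have hSne : (0:ℝ) ∈ S := by
      refine ⟨⟨le_rfl, ht1⟩, ?_⟩
      simp only [Set.mem_preimage, Set.mem_Ici, hd, hg0]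
      have := hdpos 0 le_rfl
      simp only [hD]
      linarith
    have hSbdd : BddAbove S := ⟨t1, fun x hx => hx.1.2⟩
    have hScl : IsClosed S :=
      hdcont'.preimage_isClosed_of_isClosed isClosed_Icc isClosed_Ici
    set t0 := sSup S with ht0
    have ht0S : t0 ∈ S := hScl.csSup_mem ⟨0, hSne⟩ hSbdd
    have ht0nn : (0:ℝ) ≤ t0 := ht0S.1.1
    have ht0le : t0 ≤ t1 := ht0S.1.2
    have hfnp : ∀ u ∈ Set.Ioc t0 t1, f u ≤ 0 := by
      intro u hu
      have hunn : (0:ℝ) ≤ u := ht0nn.trans hu.1.le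
      have hdu : d u < 0 := by
        by_contra hge
        push_neg at hge
        have : u ∈ S := ⟨⟨hunn, hu.2⟩, hge⟩
        exact absurd (le_csSup hSbdd this) (not_le.2 hu.1)
      have hy : y1 u - y2 u < 0 := by rw [hrep u hunn]; exact hdu
      exact sub_nonpos.2 (hmono (by linarith))
    have hDle : D t0 ≤ D t1 := hdmono ht0nn (ht0nn.trans ht0le) ht0le
    have : 0 ≤ d t1 := by
      have hgle : g t1 ≤ g t0 := by
        rw [hgadd t0 t1 ht0nn ht0le]
        have := hneg t0 t1 ht0nn ht0le hfnp
        linarith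
      have hdt0 : 0 ≤ d t0 := ht0S.2
      simp only [hd] at hdt0 ⊢
      linarith
    simp only [hd] at this
    linarith
  intro t ht
  constructor
  · rw [hrep t ht]; exact hdnn t ht
  · rw [hrep t ht]
    have := hgnn t ht
    simp only [hD]
    linarith
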